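/- Let F(z) = (πR²)^{−1} χ_R(z) on ℝ², where χ_R is the indicator function of the disc {|z| ≤ R}. Then Cov(F) = (R²/4)·I₂, so F satisfies the Robertson–Schrödinger uncertainty principle Cov(F) + (iħ/2)J ≥ 0 if and only if R ≥ √(2ħ), and saturates it (λ_{σ,1}(Cov(F)) = ħ/2) if and only if R = √(2ħ); yet for no R > 0 is F the Wigner distribution of a density matrix on L²(ℝ), since Wigner distributions are continuous and cannot be compactly supported. -/

import Mathlib

open MeasureTheory Matrix Complex Real
open scoped BigOperators ComplexConjugate ComplexOrder

noncomputable section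

namespace RSUP

/-- Phase space `ℝ^{2n}`. -/
abbrev PS (n : ℕ) := Fin (2*n) → ℝ

/-- Configuration space `ℝⁿ`. -/
abbrev CS (n : ℕ) := Fin n → ℝ

/-- The standard symplectic matrix `J = [[0, I],[−I, 0]]`. -/
def J (n : ℕ) : Matrix (Fin (2*n)) (Fin (2*n)) ℝ :=
  Matrix.of fun i j =>
    if (i : ℕ) + n = (j : ℕ) then 1 else if (j : ℕ) + n = (i : ℕ) then -1 else 0

/-- `J` as a complex matrix. -/
def Jc (n : ℕ) : Matrix (Fin (2*n)) (Fin (2*n)) ℂ := (J n).map (fun x => (x : ℂ))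

/-- The standard symplectic form `σ(z,w) = z ⬝ Jᵀ w = p·x' − x·p'`. -/
def symplForm (n : ℕ) (z w : PS n) : ℝ := z ⬝ᵥ ((J n)ᵀ *ᵥ w)

/-- The symplectic Fourier transform `(𝓕_σ F)(ζ) = (2πhb)^{−n} ∫ F(z) e^{−(i/hb)σ(ζ,z)} dz`. -/
def symplFT (n : ℕ) (hb : ℝ) (F : PS n → ℂ) : PS n → ℂ := fun ζ =>
  ((2 * π * hb) ^ n)⁻¹ • ∫ z : PS n, F z * Complex.exp (-(Complex.I / (hb:ℂ)) * ((symplForm n ζ z : ℝ) : ℂ))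

/-- The hb-scaled Fourier transform on phase space,
`(𝓕_hb F)(ζ) = (2πhb)^{−n} ∫ F(z) e^{−(i/hb) z·ζ} dz`. -/
def hbarFT (n : ℕ) (hb : ℝ) (F : PS n → ℂ) : PS n → ℂ := fun ζ =>
  ((2 * π * hb) ^ n)⁻¹ • ∫ z : PS n, F z * Complex.exp (-(Complex.I / (hb:ℂ)) * (((∑ i, z i * ζ i) : ℝ) : ℂ))

/-- The Plancherel–Fourier transform on `ℝ^d`. -/
def FT {d : ℕ} (F : (Fin d → ℝ) → ℂ) : (Fin d → ℝ) → ℂ := fun ω =>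
  ∫ x : Fin d → ℝ, F x * Complex.exp (-(2 * π * Complex.I) * (((∑ i, x i * ω i) : ℝ) : ℂ))

/-- Membership in the modulation space `M¹₂(ℝ^d)`:
`F ∈ L²` and `∫ (1+|z|²)(|F(z)|² + |𝓕F(z)|²) dz < ∞`. -/
def InM12 {d : ℕ} (F : (Fin d → ℝ) → ℂ) : Prop :=
  MemLp F 2 (volume : Measure (Fin d → ℝ)) ∧
  Integrable (fun z : Fin d → ℝ => (1 + ∑ i, z i ^ 2) * (‖F z‖ ^ 2 + ‖FT F z‖ ^ 2)) volume

/-- The mean vector `⟨z⟩_F = ∫ z F(z) dz / ∫ F(z) dz`. -/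
def meanVec {d : ℕ} (F : (Fin d → ℝ) → ℝ) : Fin d → ℝ := fun i =>
  (∫ z : Fin d → ℝ, z i * F z) / (∫ z : Fin d → ℝ, F z)

/-- The covariance matrix `Cov(F) = ∫ (z−⟨z⟩)(z−⟨z⟩)ᵀ F(z) dz / ∫ F(z) dz`. -/
def Cov {d : ℕ} (F : (Fin d → ℝ) → ℝ) : Matrix (Fin d) (Fin d) ℝ :=
  Matrix.of fun i j =>
    (∫ z : Fin d → ℝ, (z i - meanVec F i) * (z j - meanVec F j) * F z) / (∫ z : Fin d → ℝ, F z)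

/-- Finiteness of the covariance matrix of `F` (integrability of all second moments). -/
def HasFiniteCov {d : ℕ} (F : (Fin d → ℝ) → ℝ) : Prop :=
  Integrable F (volume : Measure (Fin d → ℝ)) ∧
  (∀ i, Integrable (fun z : Fin d → ℝ => z i * F z) volume) ∧
  (∀ i j, Integrable (fun z : Fin d → ℝ => z i * z j * F z) volume)

/-- The purity `𝒫[F] = (2πhb)ⁿ ∫ F(z)² dz`. -/
def purity (n : ℕ) (hb : ℝ) (F : PS n → ℝ) : ℝ := (2 * π * hb) ^ n * ∫ z : PS n, F z ^ 2

/-- `|F̃|²`, the probability density obtained by `L²`-normalizing `F` and squaring. -/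
def normSq2 {d : ℕ} (F : (Fin d → ℝ) → ℝ) : (Fin d → ℝ) → ℝ := fun z =>
  F z ^ 2 / ∫ w : Fin d → ℝ, F w ^ 2

/-- `|𝓕_σ F̃|²`, where `F̃ = F/‖F‖_{L²}`. -/
def nFTsq (n : ℕ) (hb : ℝ) (F : PS n → ℝ) : PS n → ℝ := fun z =>
  ‖symplFT n hb (fun w => (F w : ℂ)) z‖ ^ 2 / ∫ w : PS n, F w ^ 2

/-- `|𝓕_hb F̃|²`, where `F̃ = F/‖F‖_{L²}`. -/
def nhFTsq (n : ℕ) (hb : ℝ) (F : PS n → ℝ) : PS n → ℝ := fun z =>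
  ‖hbarFT n hb (fun w => (F w : ℂ)) z‖ ^ 2 / ∫ w : PS n, F w ^ 2

/-- The Hermitian matrix `A + (ihb/2) J` on `ℂ^{2n}`. -/
def RSmat (n : ℕ) (hb : ℝ) (A : Matrix (Fin (2*n)) (Fin (2*n)) ℝ) :
    Matrix (Fin (2*n)) (Fin (2*n)) ℂ :=
  A.map (fun x => (x : ℂ)) + (hb / 2) • Complex.I • Jc n

/-- The right-hand side of the refined Robertson–Schrödinger uncertainty principle,
`𝒫[F] ( Cov(|F̃|²) + ¼ Cov(|𝓕_σF̃|²) + (ihb/2)J )`. -/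
def refinedMat (n : ℕ) (hb : ℝ) (F : PS n → ℝ) : Matrix (Fin (2*n)) (Fin (2*n)) ℂ :=
  purity n hb F • RSmat n hb (Cov (normSq2 F) + (4 : ℝ)⁻¹ • Cov (nFTsq n hb F))

/-- The refined Robertson–Schrödinger uncertainty principle for `F`:
`Cov(F) + (ihb/2)J ≥ 𝒫[F](Cov(|F̃|²) + ¼ Cov(|𝓕_σF̃|²) + (ihb/2)J) ≥ 0`. -/
def SatisfiesRefinedRSUP (n : ℕ) (hb : ℝ) (F : PS n → ℝ) : Prop :=
  (RSmat n hb (Cov F) - refinedMat n hb F).PosSemidef ∧ (refinedMat n hb F).PosSemidef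

/-- The position part of a phase space point. -/
def xpart {n : ℕ} (z : PS n) : CS n := fun i => z ⟨i.val, by have := i.isLt; omega⟩

/-- The momentum part of a phase space point. -/
def ppart {n : ℕ} (z : PS n) : CS n := fun i => z ⟨n + i.val, by have := i.isLt; omega⟩

/-- The Wigner transform of a pure state `f`:
`Wf(x,p) = (2πhb)^{−n} ∫ f(x+y/2) conj(f(x−y/2)) e^{−(i/hb)p·y} dy`. -/
def Wig (n : ℕ) (hb : ℝ) (f : CS n → ℂ) : PS n → ℂ := fun z =>
  ((2 * π * hb) ^ n)⁻¹ • ∫ y : CS n,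
    f (xpart z + (2 : ℝ)⁻¹ • y) * (starRingEnd ℂ) (f (xpart z - (2 : ℝ)⁻¹ • y)) *
      Complex.exp (-(Complex.I / (hb:ℂ)) * (((∑ i, ppart z i * y i) : ℝ) : ℂ))

/-- A density matrix (positive self-adjoint trace-class operator on `L²(ℝⁿ)` of unit trace),
presented through its spectral decomposition `ρ̂ = Σ_k p_k |f_k⟩⟨f_k|` with `p_k ≥ 0`,
`Σ_k p_k = 1` and `(f_k)` orthonormal in `L²(ℝⁿ)`. -/
structure DensityOp (n : ℕ) where
  p : ℕ → ℝ
  f : ℕ → CS n → ℂ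
  p_nonneg : ∀ k, 0 ≤ p k
  p_sum : HasSum p 1
  f_L2 : ∀ k, MemLp (f k) 2 (volume : Measure (CS n))
  f_ortho : ∀ k l, ∫ x : CS n, (starRingEnd ℂ) (f k x) * f l x = if k = l then 1 else 0

/-- The Wigner distribution of a density matrix, `Wρ = Σ_k p_k W f_k`. -/
def WigMix (n : ℕ) (hb : ℝ) (ρ : DensityOp n) : PS n → ℂ := fun z =>
  ∑' k, (ρ.p k : ℂ) * Wig n hb (ρ.f k) z

/-- The state is pure, i.e. `ρ̂` is a rank-one orthogonal projection. -/
def DensityOp.IsPure {n : ℕ} (ρ : DensityOp n) : Prop := ∃ k, ρ.p k = 1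

/-- `W` is the Wigner distribution of the density matrix `ρ`, is real,
belongs to the modulation space `M¹₂(ℝ^{2n})` and has finite covariance matrix. -/
def IsWignerOf (n : ℕ) (hb : ℝ) (ρ : DensityOp n) (W : PS n → ℝ) : Prop :=
  (∀ z, WigMix n hb ρ z = (W z : ℂ)) ∧ InM12 (fun z => (W z : ℂ)) ∧ HasFiniteCov W

/-- The Boltzmann entropy `E(μ) = −∫ μ log μ`. -/
def entropy {d : ℕ} (μ : (Fin d → ℝ) → ℝ) : ℝ := -∫ z : Fin d → ℝ, μ z * Real.log (μ z)

/-- The Gaussian pure-state Wigner function with covariance matrix `B` centered at `z₀`. -/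
def gaussW (n : ℕ) (hb : ℝ) (B : Matrix (Fin (2*n)) (Fin (2*n)) ℝ) (z₀ : PS n) : PS n → ℝ :=
  fun z => ((π * hb) ^ n)⁻¹ * Real.exp (-(2:ℝ)⁻¹ * ((z - z₀) ⬝ᵥ (B⁻¹ *ᵥ (z - z₀))))

/-- `S ∈ Sp(n)`: `S` is a symplectic matrix. -/
def IsSymplectic (n : ℕ) (S : Matrix (Fin (2*n)) (Fin (2*n)) ℝ) : Prop :=
  Sᵀ * J n * S = J n

/-- The smallest symplectic eigenvalue of `B`: the smallest modulus of an eigenvalue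
of `B J⁻¹`. -/
def minSymplEig (n : ℕ) (B : Matrix (Fin (2*n)) (Fin (2*n)) ℝ) : ℝ :=
  sInf ((fun w : ℂ => ‖w‖) '' spectrum ℂ ((B * (J n)⁻¹).map (fun x => (x : ℂ))))

end RSUP

open RSUP MeasureTheory Matrix

namespace DiscAux

variable {R : ℝ}

lemma disc_polar (R : ℝ) (hR : 0 < R) (Q : ℝ × ℝ → ℝ) (g h : ℝ → ℝ)
    (key : ∀ r θ : ℝ, 0 < r → r * Q (r * Real.cos θ, r * Real.sin θ) = g r * h θ) :
    (∫ q : ℝ × ℝ, Q q * (if q.1 ^ 2 + q.2 ^ 2 ≤ R ^ 2 then (1:ℝ) else 0))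
      = (∫ r in Set.Ioc (0:ℝ) R, g r) * ∫ θ in (-π)..π, h θ := by
  rw [← integral_comp_polarCoord_symm]
  have htarget : polarCoord.target = Set.Ioi (0:ℝ) ×ˢ Set.Ioo (-π) π := rfl
  have hmeas : MeasurableSet polarCoord.target := by
    rw [htarget]; exact measurableSet_Ioi.prod measurableSet_Ioo
  have heq : Set.EqOn
      (fun p : ℝ × ℝ => p.1 • (Q (polarCoord.symm p) * (if (polarCoord.symm p).1 ^ 2 + (polarCoord.symm p).2 ^ 2 ≤ R ^ 2 then (1:ℝ) else 0)))
      (fun p : ℝ × ℝ => (Set.Iic R).indicator g p.1 * h p.2) polarCoord.target := by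
    intro p hp
    rw [htarget] at hp
    obtain ⟨hp1, hp2⟩ := hp
    have hp1' : (0:ℝ) < p.1 := hp1
    have hsymm : polarCoord.symm p = (p.1 * Real.cos p.2, p.1 * Real.sin p.2) := rfl
    have hsq : (p.1 * Real.cos p.2) ^ 2 + (p.1 * Real.sin p.2) ^ 2 = p.1 ^ 2 := by
      have := Real.sin_sq_add_cos_sq p.2; nlinarith
    have hcond : ((p.1 * Real.cos p.2) ^ 2 + (p.1 * Real.sin p.2) ^ 2 ≤ R ^ 2) ↔ p.1 ≤ R := by
      rw [hsq]
      exact pow_le_pow_iff_left₀ hp1'.le hR.le (by norm_num)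
    simp only [hsymm, smul_eq_mul]
    by_cases hc : p.1 ≤ R
    · rw [if_pos (hcond.mpr hc), Set.indicator_of_mem (Set.mem_Iic.mpr hc)]
      rw [mul_one, key p.1 p.2 hp1']
    · rw [if_neg (fun hh => hc (hcond.mp hh)), Set.indicator_of_notMem (fun hh => hc (Set.mem_Iic.mp hh))]
      ring
  rw [setIntegral_congr_fun hmeas heq]
  rw [htarget, Measure.volume_eq_prod, setIntegral_prod_mul]
  congr 1
  · rw [setIntegral_indicator measurableSet_Iic, Set.Ioi_inter_Iic,
      ← intervalIntegral.integral_of_le hR.le]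
  · rw [← integral_Ioc_eq_integral_Ioo, ← intervalIntegral.integral_of_le (by linarith [Real.pi_pos])]


lemma disc_int_one (hR : 0 < R) :
    (∫ q : ℝ × ℝ, (if q.1 ^ 2 + q.2 ^ 2 ≤ R ^ 2 then (1:ℝ) else 0)) = π * R ^ 2 := by
  have := disc_polar R hR (fun _ => 1) (fun r => r) (fun _ => 1)
    (fun r θ hr => by simp)
  simp only [one_mul] at this
  rw [this, ← intervalIntegral.integral_of_le hR.le, integral_id]
  simp
  ring

lemma disc_int_x (hR : 0 < R) :
    (∫ q : ℝ × ℝ, q.1 * (if q.1 ^ 2 + q.2 ^ 2 ≤ R ^ 2 then (1:ℝ) else 0)) = 0 := by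
  have := disc_polar R hR (fun q => q.1) (fun r => r ^ 2) (fun θ => Real.cos θ)
    (fun r θ hr => by ring)
  beta_reduce at this
  rw [this, integral_cos]
  simp

lemma disc_int_y (hR : 0 < R) :
    (∫ q : ℝ × ℝ, q.2 * (if q.1 ^ 2 + q.2 ^ 2 ≤ R ^ 2 then (1:ℝ) else 0)) = 0 := by
  have := disc_polar R hR (fun q => q.2) (fun r => r ^ 2) (fun θ => Real.sin θ)
    (fun r θ hr => by ring)
  beta_reduce at this
  rw [this, integral_sin]
  simp

lemma disc_int_xy (hR : 0 < R) :
    (∫ q : ℝ × ℝ, q.1 * q.2 * (if q.1 ^ 2 + q.2 ^ 2 ≤ R ^ 2 then (1:ℝ) else 0)) = 0 := by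
  have := disc_polar R hR (fun q => q.1 * q.2) (fun r => r ^ 3) (fun θ => Real.sin θ * Real.cos θ)
    (fun r θ hr => by ring)
  beta_reduce at this
  rw [this, integral_sin_mul_cos₁]
  simp

lemma disc_int_xx (hR : 0 < R) :
    (∫ q : ℝ × ℝ, q.1 ^ 2 * (if q.1 ^ 2 + q.2 ^ 2 ≤ R ^ 2 then (1:ℝ) else 0)) = π * R ^ 4 / 4 := by
  have := disc_polar R hR (fun q => q.1 ^ 2) (fun r => r ^ 3) (fun θ => Real.cos θ ^ 2)
    (fun r θ hr => by ring)
  beta_reduce at this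
  rw [this, integral_cos_sq, ← intervalIntegral.integral_of_le hR.le, integral_pow]
  simp
  ring

lemma disc_int_yy (hR : 0 < R) :
    (∫ q : ℝ × ℝ, q.2 ^ 2 * (if q.1 ^ 2 + q.2 ^ 2 ≤ R ^ 2 then (1:ℝ) else 0)) = π * R ^ 4 / 4 := by
  have := disc_polar R hR (fun q => q.2 ^ 2) (fun r => r ^ 3) (fun θ => Real.sin θ ^ 2)
    (fun r θ hr => by ring)
  beta_reduce at this
  rw [this, integral_sin_sq, ← intervalIntegral.integral_of_le hR.le, integral_pow]
  simp
  ring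

lemma pi_to_prod (H : (ℝ × ℝ) → ℝ) :
    (∫ z : Fin 2 → ℝ, H (z 0, z 1)) = ∫ q : ℝ × ℝ, H q := by
  have := (volume_preserving_finTwoArrow ℝ).integral_comp
    (MeasurableEquiv.finTwoArrow).measurableEmbedding H
  rw [← this]
  rfl

lemma pi_int (G : (Fin 2 → ℝ) → ℝ) (H : ℝ × ℝ → ℝ) (hGH : ∀ z, G z = H (z 0, z 1)) :
    (∫ z : Fin 2 → ℝ, G z) = ∫ q : ℝ × ℝ, H q := by
  rw [show G = fun z => H (z 0, z 1) from funext hGH]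
  exact pi_to_prod H

lemma pdisc_one (hR : 0 < R) :
    (∫ z : Fin 2 → ℝ, (if z 0 ^ 2 + z 1 ^ 2 ≤ R ^ 2 then (1:ℝ) else 0)) = π * R ^ 2 :=
  (pi_int _ (fun q => if q.1 ^ 2 + q.2 ^ 2 ≤ R ^ 2 then (1:ℝ) else 0) (fun _ => rfl)).trans
    (disc_int_one hR)

lemma pdisc_x (hR : 0 < R) :
    (∫ z : Fin 2 → ℝ, z 0 * (if z 0 ^ 2 + z 1 ^ 2 ≤ R ^ 2 then (1:ℝ) else 0)) = 0 :=
  (pi_int _ (fun q => q.1 * (if q.1 ^ 2 + q.2 ^ 2 ≤ R ^ 2 then (1:ℝ) else 0)) (fun _ => rfl)).trans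
    (disc_int_x hR)

lemma pdisc_y (hR : 0 < R) :
    (∫ z : Fin 2 → ℝ, z 1 * (if z 0 ^ 2 + z 1 ^ 2 ≤ R ^ 2 then (1:ℝ) else 0)) = 0 :=
  (pi_int _ (fun q => q.2 * (if q.1 ^ 2 + q.2 ^ 2 ≤ R ^ 2 then (1:ℝ) else 0)) (fun _ => rfl)).trans
    (disc_int_y hR)

lemma pdisc_xy (hR : 0 < R) :
    (∫ z : Fin 2 → ℝ, z 0 * z 1 * (if z 0 ^ 2 + z 1 ^ 2 ≤ R ^ 2 then (1:ℝ) else 0)) = 0 :=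
  (pi_int _ (fun q => q.1 * q.2 * (if q.1 ^ 2 + q.2 ^ 2 ≤ R ^ 2 then (1:ℝ) else 0)) (fun _ => rfl)).trans
    (disc_int_xy hR)

lemma pdisc_xx (hR : 0 < R) :
    (∫ z : Fin 2 → ℝ, z 0 * z 0 * (if z 0 ^ 2 + z 1 ^ 2 ≤ R ^ 2 then (1:ℝ) else 0)) = π * R ^ 4 / 4 :=
  (pi_int _ (fun q => q.1 * q.1 * (if q.1 ^ 2 + q.2 ^ 2 ≤ R ^ 2 then (1:ℝ) else 0)) (fun _ => rfl)).trans
    (by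
      have : (fun q : ℝ × ℝ => q.1 * q.1 * (if q.1 ^ 2 + q.2 ^ 2 ≤ R ^ 2 then (1:ℝ) else 0))
          = fun q : ℝ × ℝ => q.1 ^ 2 * (if q.1 ^ 2 + q.2 ^ 2 ≤ R ^ 2 then (1:ℝ) else 0) := by
        funext q; ring
      rw [this]; exact disc_int_xx hR)

lemma pdisc_yy (hR : 0 < R) :
    (∫ z : Fin 2 → ℝ, z 1 * z 1 * (if z 0 ^ 2 + z 1 ^ 2 ≤ R ^ 2 then (1:ℝ) else 0)) = π * R ^ 4 / 4 :=
  (pi_int _ (fun q => q.2 * q.2 * (if q.1 ^ 2 + q.2 ^ 2 ≤ R ^ 2 then (1:ℝ) else 0)) (fun _ => rfl)).trans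
    (by
      have : (fun q : ℝ × ℝ => q.2 * q.2 * (if q.1 ^ 2 + q.2 ^ 2 ≤ R ^ 2 then (1:ℝ) else 0))
          = fun q : ℝ × ℝ => q.2 ^ 2 * (if q.1 ^ 2 + q.2 ^ 2 ≤ R ^ 2 then (1:ℝ) else 0) := by
        funext q; ring
      rw [this]; exact disc_int_yy hR)

lemma pdisc_yx (hR : 0 < R) :
    (∫ z : Fin 2 → ℝ, z 1 * z 0 * (if z 0 ^ 2 + z 1 ^ 2 ≤ R ^ 2 then (1:ℝ) else 0)) = 0 :=
  (pi_int _ (fun q => q.2 * q.1 * (if q.1 ^ 2 + q.2 ^ 2 ≤ R ^ 2 then (1:ℝ) else 0)) (fun _ => rfl)).trans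
    (by
      have : (fun q : ℝ × ℝ => q.2 * q.1 * (if q.1 ^ 2 + q.2 ^ 2 ≤ R ^ 2 then (1:ℝ) else 0))
          = fun q : ℝ × ℝ => q.1 * q.2 * (if q.1 ^ 2 + q.2 ^ 2 ≤ R ^ 2 then (1:ℝ) else 0) := by
        funext q; ring
      rw [this]; exact disc_int_xy hR)

lemma disc_moments (hR : 0 < R) (F : (Fin 2 → ℝ) → ℝ)
    (hF : F = fun z => (π * R ^ 2)⁻¹ * (if z 0 ^ 2 + z 1 ^ 2 ≤ R ^ 2 then (1:ℝ) else 0)) :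
    (∫ z : Fin 2 → ℝ, F z) = 1 ∧
    (∀ i, (∫ z : Fin 2 → ℝ, z i * F z) = 0) ∧
    (∀ i j, (∫ z : Fin 2 → ℝ, z i * z j * F z) = if i = j then R ^ 2 / 4 else 0) := by
  have hπR : π * R ^ 2 ≠ 0 := by positivity
  subst hF
  refine ⟨?_, ?_, ?_⟩
  · rw [integral_const_mul, pdisc_one hR]
    field_simp
  · rw [Fin.forall_fin_two]
    constructor
    · have h1 : (fun z : Fin 2 → ℝ => z 0 * ((π * R ^ 2)⁻¹ * (if z 0 ^ 2 + z 1 ^ 2 ≤ R ^ 2 then (1:ℝ) else 0)))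
          = fun z : Fin 2 → ℝ => (π * R ^ 2)⁻¹ * (z 0 * (if z 0 ^ 2 + z 1 ^ 2 ≤ R ^ 2 then (1:ℝ) else 0)) := by
        funext z; ring
      rw [h1, integral_const_mul, pdisc_x hR, mul_zero]
    · have h1 : (fun z : Fin 2 → ℝ => z 1 * ((π * R ^ 2)⁻¹ * (if z 0 ^ 2 + z 1 ^ 2 ≤ R ^ 2 then (1:ℝ) else 0)))
          = fun z : Fin 2 → ℝ => (π * R ^ 2)⁻¹ * (z 1 * (if z 0 ^ 2 + z 1 ^ 2 ≤ R ^ 2 then (1:ℝ) else 0)) := by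
        funext z; ring
      rw [h1, integral_const_mul, pdisc_y hR, mul_zero]
  · have key : ∀ i j : Fin 2,
        (fun z : Fin 2 → ℝ => z i * z j * ((π * R ^ 2)⁻¹ * (if z 0 ^ 2 + z 1 ^ 2 ≤ R ^ 2 then (1:ℝ) else 0)))
          = fun z : Fin 2 → ℝ => (π * R ^ 2)⁻¹ * (z i * z j * (if z 0 ^ 2 + z 1 ^ 2 ≤ R ^ 2 then (1:ℝ) else 0)) := by
      intro i j; funext z; ring
    rw [Fin.forall_fin_two]
    constructor <;> rw [Fin.forall_fin_two] <;> constructor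
    · rw [key 0 0, integral_const_mul, pdisc_xx hR, if_pos rfl]
      field_simp
    · rw [key 0 1, integral_const_mul, pdisc_xy hR, mul_zero, if_neg (by decide)]
    · rw [key 1 0, integral_const_mul, pdisc_yx hR, mul_zero, if_neg (by decide)]
    · rw [key 1 1, integral_const_mul, pdisc_yy hR, if_pos rfl]
      field_simp

lemma cov_disc (hR : 0 < R) (F : (Fin 2 → ℝ) → ℝ)
    (hF : F = fun z => (π * R ^ 2)⁻¹ * (if z 0 ^ 2 + z 1 ^ 2 ≤ R ^ 2 then (1:ℝ) else 0)) :
    Cov F = (R ^ 2 / 4) • (1 : Matrix (Fin 2) (Fin 2) ℝ) := by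
  obtain ⟨h0, h1, h2⟩ := disc_moments hR F hF
  have hmean : ∀ i, meanVec F i = 0 := by
    intro i
    show (∫ z : Fin 2 → ℝ, z i * F z) / (∫ z : Fin 2 → ℝ, F z) = 0
    rw [h1 i, h0]
    norm_num
  ext i j
  show (∫ z : Fin 2 → ℝ, (z i - meanVec F i) * (z j - meanVec F j) * F z)
      / (∫ z : Fin 2 → ℝ, F z) = ((R ^ 2 / 4) • (1 : Matrix (Fin 2) (Fin 2) ℝ)) i j
  rw [h0, div_one]
  simp only [hmean, sub_zero]
  rw [h2 i j, Matrix.smul_apply, Matrix.one_apply]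
  by_cases hij : i = j <;> simp [hij]

end DiscAux

namespace DiscAux2

lemma rsmat_eq (hb a : ℝ) :
    RSmat 1 hb (a • 1) =
      Matrix.of ![![(a:ℂ), (hb/2) * Complex.I], ![-((hb/2) * Complex.I), (a:ℂ)]] := by
  ext i j
  fin_cases i <;> fin_cases j <;>
    simp [RSmat, Jc, RSUP.J, Matrix.one_apply] <;> ring

lemma part2 (hb R : ℝ) (hhb : 0 < hb) (hR : 0 < R) :
    (RSmat 1 hb ((R^2/4) • (1 : Matrix (Fin (2*1)) (Fin (2*1)) ℝ))).PosSemidef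
      ↔ Real.sqrt (2 * hb) ≤ R := by
  have hsqrt : Real.sqrt (2*hb) ≤ R ↔ hb/2 ≤ R^2/4 := by
    rw [show R = Real.sqrt (R^2) from (Real.sqrt_sq hR.le).symm,
      Real.sqrt_le_sqrt_iff (by positivity)]
    constructor <;> intro h <;> nlinarith [Real.sq_sqrt (show (0:ℝ) ≤ R^2 by positivity), Real.sqrt_sq hR.le]
  rw [hsqrt, rsmat_eq]
  set M : Matrix (Fin (2*1)) (Fin (2*1)) ℂ :=
    Matrix.of ![![((R^2/4 : ℝ):ℂ), (hb/2) * Complex.I], ![-((hb/2) * Complex.I), ((R^2/4 : ℝ):ℂ)]] with hM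
  constructor
  · intro h
    have hx := h.dotProduct_mulVec_nonneg ![1, Complex.I]
    have hval : star ![(1:ℂ), Complex.I] ⬝ᵥ M *ᵥ ![1, Complex.I]
        = ((2*(R^2/4 - hb/2) : ℝ) : ℂ) := by
      simp [hM, dotProduct, Matrix.mulVec, Fin.sum_univ_two]
      rw [Complex.ext_iff]
      push_cast
      constructor <;> simp <;> ring
    rw [hval, Complex.zero_le_real] at hx
    linarith
  · intro hca
    refine Matrix.posSemidef_iff_dotProduct_mulVec.mpr ⟨?_, ?_⟩
    · rw [Matrix.IsHermitian]
      ext i j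
      fin_cases i <;> fin_cases j <;>
        simp [hM, Matrix.conjTranspose_apply] <;> ring
    · intro x
      set w : ℂ := (starRingEnd ℂ) (x 0) * x 1 with hw
      have e0 : (starRingEnd ℂ) (x 0) * x 0 = (Complex.normSq (x 0) : ℂ) := by
        rw [mul_comm]; exact Complex.mul_conj (x 0)
      have e1 : (starRingEnd ℂ) (x 1) * x 1 = (Complex.normSq (x 1) : ℂ) := by
        rw [mul_comm]; exact Complex.mul_conj (x 1)
      have esub : (starRingEnd ℂ) (x 0) * x 1 - (starRingEnd ℂ) (x 1) * x 0
          = 2 * (w.im : ℂ) * Complex.I := by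
        have hconj : (starRingEnd ℂ) w = (starRingEnd ℂ) (x 1) * x 0 := by
          rw [hw, _root_.map_mul, Complex.conj_conj, mul_comm]
        calc (starRingEnd ℂ) (x 0) * x 1 - (starRingEnd ℂ) (x 1) * x 0
            = w - (starRingEnd ℂ) w := by rw [hw, hconj]
        _ = 2 * (w.im : ℂ) * Complex.I := by
            rw [Complex.sub_conj]; push_cast; ring
      have hexp : star x ⬝ᵥ M *ᵥ x =
          (((R^2/4) * (Complex.normSq (x 0) + Complex.normSq (x 1))
            - 2 * (hb/2) * w.im : ℝ) : ℂ) := by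
        simp [hM, dotProduct, Matrix.mulVec, Fin.sum_univ_two]
        push_cast
        linear_combination ((R:ℂ)^2/4) * e0 + ((R:ℂ)^2/4) * e1
          + ((hb:ℂ)/2) * Complex.I * esub
          + ((hb:ℂ)/2 * (2 * (w.im:ℂ))) * Complex.I_sq
      rw [hexp, Complex.zero_le_real]
      have him : |w.im| ≤ ‖x 0‖ * ‖x 1‖ := by
        calc |w.im| ≤ ‖w‖ := Complex.abs_im_le_norm _
        _ = ‖x 0‖ * ‖x 1‖ := by
            rw [hw, norm_mul, Complex.norm_conj]
      have hn0 : Complex.normSq (x 0) = ‖x 0‖ ^ 2 := Complex.normSq_eq_norm_sq _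
      have hn1 : Complex.normSq (x 1) = ‖x 1‖ ^ 2 := Complex.normSq_eq_norm_sq _
      rw [hn0, hn1]
      have habs := abs_le.mp him
      nlinarith [sq_nonneg (‖x 0‖ - ‖x 1‖),
        norm_nonneg (x 0), norm_nonneg (x 1)]

lemma J1_inv : (RSUP.J 1)⁻¹ = -(RSUP.J 1) := by
  apply Matrix.inv_eq_right_inv
  ext i j
  fin_cases i <;> fin_cases j <;>
    simp [RSUP.J, Matrix.mul_apply, Fin.sum_univ_two, Matrix.one_apply]

lemma prod_mat_eq (R : ℝ) :
    (((R^2/4) • (1 : Matrix (Fin (2*1)) (Fin (2*1)) ℝ) * (RSUP.J 1)⁻¹).map (fun x => (x:ℂ)))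
      = Matrix.of ![![0, -((R^2/4 : ℝ):ℂ)], ![((R^2/4 : ℝ):ℂ), 0]] := by
  rw [J1_inv]
  ext i j
  fin_cases i <;> fin_cases j <;>
    simp [RSUP.J, Matrix.mul_apply, Fin.sum_univ_two, Matrix.one_apply]

lemma spectrum_eq (a : ℝ) :
    spectrum ℂ (Matrix.of ![![0, -((a : ℝ):ℂ)], ![((a : ℝ):ℂ), 0]]
        : Matrix (Fin (2*1)) (Fin (2*1)) ℂ)
      = {Complex.I * a, -(Complex.I * a)} := by
  ext μ
  rw [spectrum.mem_iff, Matrix.isUnit_iff_isUnit_det, isUnit_iff_ne_zero, not_ne_iff]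
  have hdet : ((algebraMap ℂ (Matrix (Fin (2*1)) (Fin (2*1)) ℂ)) μ -
      Matrix.of ![![0, -((a : ℝ):ℂ)], ![((a : ℝ):ℂ), 0]]).det
      = (μ - Complex.I * a) * (μ + Complex.I * a) := by
    rw [Matrix.det_fin_two]
    simp [Matrix.algebraMap_matrix_apply]
    ring_nf
    rw [Complex.I_sq]
    ring
  rw [hdet, mul_eq_zero, sub_eq_zero, add_eq_zero_iff_eq_neg]
  simp [Set.mem_insert_iff]

lemma part3 (hb R : ℝ) (hhb : 0 < hb) (hR : 0 < R) :
    minSymplEig 1 ((R^2/4) • (1 : Matrix (Fin (2*1)) (Fin (2*1)) ℝ)) = hb / 2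
      ↔ R = Real.sqrt (2 * hb) := by
  have hval : minSymplEig 1 ((R^2/4) • (1 : Matrix (Fin (2*1)) (Fin (2*1)) ℝ)) = R^2/4 := by
    rw [minSymplEig, prod_mat_eq, spectrum_eq]
    have himg : (fun w : ℂ => ‖w‖) '' {Complex.I * (R^2/4 : ℝ), -(Complex.I * (R^2/4 : ℝ))}
        = {R^2/4} := by
      rw [Set.image_pair]
      have h1 : ‖Complex.I * (R^2/4 : ℝ)‖ = R^2/4 := by
        rw [norm_mul, Complex.norm_I, Complex.norm_real, one_mul, Real.norm_eq_abs]
        exact abs_of_nonneg (by positivity)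
      rw [norm_neg, h1, Set.pair_eq_singleton]
    rw [himg, csInf_singleton]
  rw [hval]
  constructor
  · intro h
    have hR2 : R^2 = 2*hb := by linarith
    rw [← hR2, Real.sqrt_sq hR.le]
  · intro h
    rw [h, Real.sq_sqrt (by positivity)]
    ring

end DiscAux2

namespace P4

/-- The phase-space point (0, p). -/
def zp (p : ℝ) : PS 1 := fun i => if (i : ℕ) = 1 then p else 0

lemma qmp_div (c : ℝ) (hc : c ≠ 0) :
    MeasureTheory.Measure.QuasiMeasurePreserving (fun t : ℝ => t / c) volume volume := by
  refine ⟨measurable_id.div_const c, ?_⟩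
  have h : (fun t : ℝ => t / c) = fun t : ℝ => c⁻¹ * t := by funext t; field_simp
  rw [h, Real.map_volume_mul_left (inv_ne_zero hc)]
  exact Measure.AbsolutelyContinuous.rfl.smul_left _

lemma qmp_negdiv (c : ℝ) (hc : c ≠ 0) :
    MeasureTheory.Measure.QuasiMeasurePreserving (fun t : ℝ => -t / c) volume volume := by
  refine ⟨(measurable_id.neg).div_const c, ?_⟩
  have h : (fun t : ℝ => -t / c) = fun t : ℝ => (-c⁻¹) * t := by funext t; field_simp
  rw [h, Real.map_volume_mul_left (by simpa using inv_ne_zero hc)]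
  exact Measure.AbsolutelyContinuous.rfl.smul_left _

lemma exp_norm_one (hb : ℝ) (hhb : 0 < hb) (r : ℝ) :
    ‖Complex.exp (-(Complex.I / (hb:ℂ)) * ((r : ℝ) : ℂ))‖ = 1 := by
  have h : -(Complex.I / (hb:ℂ)) * ((r : ℝ) : ℂ) = ((-r/hb : ℝ) : ℂ) * Complex.I := by
    push_cast
    ring
  rw [h]
  rw [Complex.norm_exp_ofReal_mul_I]

section WigCont

variable (hb : ℝ) (f : CS 1 → ℂ)

/-- transfer equiv -/
abbrev e1 : (Fin 1 → ℝ) ≃ᵐ ℝ := MeasurableEquiv.funUnique (Fin 1) ℝ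

lemma mp1 : MeasurePreserving (⇑e1) (volume : Measure (Fin 1 → ℝ)) volume :=
  volume_preserving_funUnique (Fin 1) ℝ

lemma mp1s : MeasurePreserving (⇑(e1).symm) volume (volume : Measure (Fin 1 → ℝ)) :=
  MeasurePreserving.symm _ mp1

noncomputable def F1 : ℝ → ℂ := fun t => f (fun _ => t)

noncomputable def u1 : ℝ → ℂ := fun t => F1 f (t/2) * (starRingEnd ℂ) (F1 f (-t/2))

noncomputable def B1 : ℝ → ℝ := fun t => (‖F1 f (t/2)‖^2 + ‖F1 f (-t/2)‖^2)/2

variable (hf2 : MemLp f 2 (volume : Measure (CS 1)))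

include hf2

lemma hF1m : AEStronglyMeasurable (F1 f) volume := by
  exact hf2.aestronglyMeasurable.comp_measurePreserving mp1s

lemma hGint : Integrable (fun t : ℝ => ‖F1 f t‖^2) volume := by
  have hg : Integrable (fun z : CS 1 => ‖f z‖^2) volume :=
    (memLp_two_iff_integrable_sq_norm hf2.aestronglyMeasurable).mp hf2
  exact (mp1s.integrable_comp_emb (e1).symm.measurableEmbedding).mpr hg

lemma hu1m : AEStronglyMeasurable (u1 f) volume := by
  have hA : AEStronglyMeasurable (fun t : ℝ => F1 f (t/2)) volume :=
    (hF1m f hf2).comp_quasiMeasurePreserving (qmp_div 2 two_ne_zero)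
  have hB : AEStronglyMeasurable (fun t : ℝ => F1 f (-t/2)) volume :=
    (hF1m f hf2).comp_quasiMeasurePreserving (qmp_negdiv 2 two_ne_zero)
  exact hA.mul (Complex.continuous_conj.comp_aestronglyMeasurable hB)

lemma hB1int : Integrable (B1 f) volume := by
  have h1 : Integrable (fun t : ℝ => ‖F1 f (t/2)‖^2) volume :=
    (hGint f hf2).comp_div two_ne_zero
  have h2 : Integrable (fun t : ℝ => ‖F1 f (-t/2)‖^2) volume := by
    have := ((Measure.measurePreserving_neg (volume : Measure ℝ)).integrable_comp_emb
      (MeasurableEquiv.neg ℝ).measurableEmbedding).mpr h1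
    exact this
  exact (h1.add h2).div_const 2

omit hf2 in
lemma hu1bound : ∀ t, ‖u1 f t‖ ≤ B1 f t := by
  intro t
  rw [u1, norm_mul, RCLike.norm_conj]
  rw [B1]
  nlinarith [sq_nonneg (‖F1 f (t/2)‖ - ‖F1 f (-t/2)‖), norm_nonneg (F1 f (t/2)),
    norm_nonneg (F1 f (-t/2))]

omit hf2 in
lemma hnormval (hnorm : (∫ x : CS 1, ‖f x‖^2) = 1) : (∫ t : ℝ, ‖F1 f t‖^2) = 1 := by
  exact (mp1s.integral_comp (e1).symm.measurableEmbedding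
    (fun z : CS 1 => ‖f z‖^2)).trans hnorm

lemma hB1val (hnorm : (∫ x : CS 1, ‖f x‖^2) = 1) : (∫ t : ℝ, B1 f t) = 2 := by
  have hG := hnormval f hnorm
  have h1 : (∫ t : ℝ, ‖F1 f (t/2)‖^2) = 2 := by
    have := MeasureTheory.Measure.integral_comp_div (fun t : ℝ => ‖F1 f t‖^2) 2
    rw [this, hG]
    norm_num
  have h2 : (∫ t : ℝ, ‖F1 f (-t/2)‖^2) = 2 := by
    have := integral_neg_eq_self (fun t : ℝ => ‖F1 f (t/2)‖^2) (volume : Measure ℝ)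
    exact this.trans h1
  have hi1 : Integrable (fun t : ℝ => ‖F1 f (t/2)‖^2) volume :=
    (hGint f hf2).comp_div two_ne_zero
  have hi2 : Integrable (fun t : ℝ => ‖F1 f (-t/2)‖^2) volume :=
    ((Measure.measurePreserving_neg (volume : Measure ℝ)).integrable_comp_emb
      (MeasurableEquiv.neg ℝ).measurableEmbedding).mpr hi1
  show (∫ t : ℝ, (‖F1 f (t/2)‖^2 + ‖F1 f (-t/2)‖^2)/2) = 2
  rw [integral_div, integral_add hi1 hi2, h1, h2]
  norm_num

omit hf2 in
lemma wig_key (p : ℝ) :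
    Wig 1 hb f (zp p) = ((2 * π * hb) ^ 1)⁻¹ •
      ∫ y : CS 1, u1 f (y 0) * Complex.exp (-(Complex.I / (hb:ℂ)) * ((p * y 0 : ℝ) : ℂ)) := by
  rw [Wig]
  congr 1
  apply integral_congr_ae
  apply Filter.EventuallyEq.of_eq
  funext y
  have hx1 : xpart (zp p) + (2:ℝ)⁻¹ • y = (fun _ : Fin 1 => y 0 / 2) := by
    funext i
    have hi : i = 0 := Subsingleton.elim i 0
    subst hi
    simp only [Pi.add_apply, Pi.smul_apply, smul_eq_mul, xpart, zp]
    norm_num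
    ring
  have hx2 : xpart (zp p) - (2:ℝ)⁻¹ • y = (fun _ : Fin 1 => -(y 0) / 2) := by
    funext i
    have hi : i = 0 := Subsingleton.elim i 0
    subst hi
    simp only [Pi.sub_apply, Pi.smul_apply, smul_eq_mul, xpart, zp]
    norm_num
    ring
  have hsum : (∑ i, ppart (zp p) i * y i) = p * y 0 := by
    rw [Fin.sum_univ_one]
    simp [ppart, zp]
  rw [hx1, hx2, hsum]
  rfl

lemma wig_cont (hhb : 0 < hb) : Continuous (fun p : ℝ => Wig 1 hb f (zp p)) := by
  have hkey := wig_key hb f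
  have hcont : Continuous (fun p : ℝ =>
      ∫ y : CS 1, u1 f (y 0) * Complex.exp (-(Complex.I / (hb:ℂ)) * ((p * y 0 : ℝ) : ℂ))) := by
    apply continuous_of_dominated (bound := fun y : CS 1 => B1 f (y 0))
    · intro p
      have hu : AEStronglyMeasurable (fun y : CS 1 => u1 f (y 0)) volume :=
        (hu1m f hf2).comp_measurePreserving mp1
      exact hu.mul (Continuous.aestronglyMeasurable (by fun_prop))
    · intro p
      apply Filter.Eventually.of_forall
      intro y
      rw [norm_mul, exp_norm_one hb hhb]
      rw [mul_one]
      exact hu1bound f (y 0)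
    · exact (mp1.integrable_comp_emb (e1).measurableEmbedding).mpr (hB1int f hf2)
    · apply Filter.Eventually.of_forall
      intro y
      fun_prop
  have : (fun p : ℝ => Wig 1 hb f (zp p)) = fun p => ((2 * π * hb) ^ 1)⁻¹ •
      ∫ y : CS 1, u1 f (y 0) * Complex.exp (-(Complex.I / (hb:ℂ)) * ((p * y 0 : ℝ) : ℂ)) :=
    funext hkey
  rw [this]
  exact hcont.const_smul (((2 * π * hb) ^ 1)⁻¹ : ℝ)

lemma wig_bound (hhb : 0 < hb) (hnorm : (∫ x : CS 1, ‖f x‖^2) = 1) (p : ℝ) :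
    ‖Wig 1 hb f (zp p)‖ ≤ (π * hb)⁻¹ := by
  rw [wig_key hb f p, norm_smul]
  have h1 : ‖∫ y : CS 1, u1 f (y 0) * Complex.exp (-(Complex.I / (hb:ℂ)) * ((p * y 0 : ℝ) : ℂ))‖
      ≤ 2 := by
    refine (norm_integral_le_integral_norm _).trans ?_
    have hle : (∫ y : CS 1,
        ‖u1 f (y 0) * Complex.exp (-(Complex.I / (hb:ℂ)) * ((p * y 0 : ℝ) : ℂ))‖)
        ≤ ∫ y : CS 1, B1 f (y 0) := by
      apply integral_mono_of_nonneg
      · exact Filter.Eventually.of_forall (fun y => norm_nonneg _)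
      · exact (mp1.integrable_comp_emb (e1).measurableEmbedding).mpr (hB1int f hf2)
      · apply Filter.Eventually.of_forall
        intro y
        beta_reduce
        rw [norm_mul, exp_norm_one hb hhb, mul_one]
        exact hu1bound f (y 0)
    refine hle.trans ?_
    have hval2 : (∫ y : CS 1, B1 f (y 0)) = (∫ t : ℝ, B1 f t) :=
      mp1.integral_comp (e1).measurableEmbedding (B1 f)
    rw [hval2, hB1val f hf2 hnorm]
  have h2 : ‖((2 * π * hb) ^ 1)⁻¹‖ = ((2 * π * hb))⁻¹ := by
    rw [pow_one, Real.norm_eq_abs, _root_.abs_of_nonneg (by positivity)]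
  rw [h2]
  calc (2 * π * hb)⁻¹ * ‖∫ y : CS 1, u1 f (y 0) *
        Complex.exp (-(Complex.I / (hb:ℂ)) * ((p * y 0 : ℝ) : ℂ))‖
      ≤ (2 * π * hb)⁻¹ * 2 := by
        apply mul_le_mul_of_nonneg_left h1 (by positivity)
    _ = (π * hb)⁻¹ := by
        field_simp

end WigCont

lemma fk_norm (ρ : DensityOp 1) (k : ℕ) : (∫ x : CS 1, ‖ρ.f k x‖^2) = 1 := by
  have h := ρ.f_ortho k k
  rw [if_pos rfl] at h
  have heq : (fun x : CS 1 => (starRingEnd ℂ) (ρ.f k x) * ρ.f k x)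
      = fun x : CS 1 => ((‖ρ.f k x‖^2 : ℝ) : ℂ) := by
    funext x
    rw [mul_comm, Complex.mul_conj]
    rw [Complex.normSq_eq_norm_sq]
  rw [heq] at h
  have h3 : (∫ x : CS 1, ((‖ρ.f k x‖^2 : ℝ) : ℂ)) = ((∫ x : CS 1, ‖ρ.f k x‖^2 : ℝ) : ℂ) :=
    integral_ofReal
  rw [h3] at h
  exact_mod_cast h

lemma part4 (hb : ℝ) (hhb : 0 < hb) (R : ℝ) (hR : 0 < R) (F : PS 1 → ℝ)
    (hF : F = fun z => (π * R ^ 2)⁻¹ * (if (∑ i, z i ^ 2) ≤ R ^ 2 then 1 else 0)) :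
    ¬ ∃ ρ : DensityOp 1, ∀ z, WigMix 1 hb ρ z = (F z : ℂ) := by
  rintro ⟨ρ, hρ⟩
  -- continuity of p ↦ WigMix (zp p)
  have hcont : Continuous (fun p : ℝ => WigMix 1 hb ρ (zp p)) := by
    show Continuous (fun p : ℝ => ∑' k, (ρ.p k : ℂ) * Wig 1 hb (ρ.f k) (zp p))
    apply continuous_tsum (u := fun k => ρ.p k * (π * hb)⁻¹)
    · intro k
      exact continuous_const.mul (wig_cont hb (ρ.f k) (ρ.f_L2 k) hhb)
    · exact ρ.p_sum.summable.mul_right _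
    · intro k p
      rw [norm_mul, Complex.norm_real, Real.norm_eq_abs, _root_.abs_of_nonneg (ρ.p_nonneg k)]
      exact mul_le_mul_of_nonneg_left
        (wig_bound hb (ρ.f k) (ρ.f_L2 k) hhb (fk_norm ρ k) p) (ρ.p_nonneg k)
  -- evaluate F at zp p
  have hFz : ∀ p : ℝ, F (zp p) = (π * R ^ 2)⁻¹ * (if p^2 ≤ R^2 then 1 else 0) := by
    intro p
    rw [hF]
    have hsum : (∑ i, zp p i ^ 2) = p ^ 2 := by
      rw [Fin.sum_univ_two]
      simp [zp]
    show (π * R ^ 2)⁻¹ * (if (∑ i, zp p i ^ 2) ≤ R ^ 2 then (1:ℝ) else 0) = _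
    rw [hsum]
  set g : ℝ → ℝ := fun p => (π * R ^ 2)⁻¹ * (if p^2 ≤ R^2 then 1 else 0) with hg
  have hgc : Continuous g := by
    have h1 : (fun p : ℝ => WigMix 1 hb ρ (zp p)) = fun p => ((g p : ℝ) : ℂ) := by
      funext p
      rw [hρ (zp p), hFz p]
    rw [h1] at hcont
    have := Complex.continuous_re.comp hcont
    simpa [Function.comp_def] using this
  -- sequence approaching R from the right
  have hx : Filter.Tendsto (fun n : ℕ => R + 1/(n+1)) Filter.atTop (nhds R) := by
    have := tendsto_one_div_add_atTop_nhds_zero_nat (𝕜 := ℝ)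
    have h2 := Filter.Tendsto.const_add R this
    simpa using h2
  have hgx : Filter.Tendsto (fun n : ℕ => g (R + 1/(n+1))) Filter.atTop (nhds (g R)) :=
    (hgc.continuousAt.tendsto).comp hx
  have hzero : ∀ n : ℕ, g (R + 1/(n+1)) = 0 := by
    intro n
    have hpos : (0:ℝ) < 1/(n+1) := by positivity
    have : ¬ ((R + 1/(n+1))^2 ≤ R^2) := by nlinarith
    rw [hg]
    simp only [this, if_false, mul_zero]
  have hgR : g R = 0 := by
    have : Filter.Tendsto (fun _ : ℕ => (0:ℝ)) Filter.atTop (nhds (g R)) := by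
      rw [show (fun _ : ℕ => (0:ℝ)) = fun n : ℕ => g (R + 1/(n+1)) from
        funext fun n => (hzero n).symm]
      exact hgx
    exact tendsto_nhds_unique this tendsto_const_nhds
  have : g R = (π * R^2)⁻¹ := by
    rw [hg]
    simp only [le_refl, if_pos, mul_one]
  rw [this] at hgR
  have : (0:ℝ) < (π * R^2)⁻¹ := by positivity
  linarith

end P4


open DiscAux DiscAux2 P4

/-- The normalized indicator of the disc of radius `R` in `ℝ²`,
`F = (πR²)⁻¹ χ_R`, has `Cov(F) = (R²/4) I`; it satisfies the Robertson–Schrödinger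
uncertainty principle iff `R ≥ √(2 hb)` and saturates it (`λ_{σ,1}(Cov F) = hb/2`) iff
`R = √(2 hb)`; yet for no `R > 0` is `F` the Wigner distribution of a density matrix. -/
theorem disc_indicator_example
    (hb : ℝ) (hhb : 0 < hb) (R : ℝ) (hR : 0 < R)
    (F : PS 1 → ℝ)
    (hF : F = fun z => (π * R ^ 2)⁻¹ * (if (∑ i, z i ^ 2) ≤ R ^ 2 then 1 else 0)) :
    Cov F = (R ^ 2 / 4) • (1 : Matrix (Fin (2*1)) (Fin (2*1)) ℝ) ∧
    ((RSmat 1 hb (Cov F)).PosSemidef ↔ Real.sqrt (2 * hb) ≤ R) ∧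
    (minSymplEig 1 (Cov F) = hb / 2 ↔ R = Real.sqrt (2 * hb)) ∧
    ¬ ∃ ρ : DensityOp 1, ∀ z, WigMix 1 hb ρ z = (F z : ℂ) := by
  have hF2 : F = fun z : Fin 2 → ℝ =>
      (π * R ^ 2)⁻¹ * (if z 0 ^ 2 + z 1 ^ 2 ≤ R ^ 2 then (1:ℝ) else 0) := by
    funext z
    rw [hF]
    show (π * R ^ 2)⁻¹ * (if (∑ i : Fin 2, z i ^ 2) ≤ R ^ 2 then (1:ℝ) else 0) = _
    rw [Fin.sum_univ_two]
  have hCov : Cov F = (R ^ 2 / 4) • (1 : Matrix (Fin (2*1)) (Fin (2*1)) ℝ) :=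
    DiscAux.cov_disc hR F hF2
  refine ⟨hCov, ?_, ?_, ?_⟩
  · rw [hCov]
    exact DiscAux2.part2 hb R hhb hR
  · rw [hCov]
    exact DiscAux2.part3 hb R hhb hR
  · exact P4.part4 hb hhb R hR F hF
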